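/- arXiv:1309.3660 — 3 statements merged into one kernel-verified Lean document; each statement's English description precedes it below -/
import Mathlib

section
/- Under the assumptions that W is a nonnegative row-stochastic matrix with a strictly positive column, Q is row-stochastic with Q i i = 0, and Δ is diagonal with 0 ≤ δ_i < 1 for all i, the matrix M = D + (W − D)·(I − ΔQ)^{-1}·(I − Δ) is nonnegative and has a strictly positive column (the same column index as W's positive column). -/
open Matrix

attribute [local instance] Matrix.linftyOpNormedAddCommGroup Matrix.linftyOpNormedRing
  Matrix.linftyOpNormedSpace Matrix.linftyOpNormedAlgebra

lemma aux_inv (n : ℕ) (B : Matrix (Fin n) (Fin n) ℝ) (hB : ∀ i k, 0 ≤ B i k)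
    (hrow : ∀ i, ∑ k, B i k < 1) :
    (∀ i k, 0 ≤ (1 - B)⁻¹ i k) ∧ (1 - B)⁻¹ = 1 + B * (1 - B)⁻¹ := by
  have hnorm : ‖B‖ < 1 := by
    rw [Matrix.linfty_opNorm_def]
    rw [show (1:ℝ) = ((1:NNReal):ℝ) by norm_num, NNReal.coe_lt_coe]
    refine Finset.sup_lt_iff (by norm_num) |>.mpr fun i _ => ?_
    have : ((∑ k, ‖B i k‖₊ : NNReal) : ℝ) < 1 := by
      push_cast
      calc ∑ k, ‖B i k‖ = ∑ k, B i k := by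
            refine Finset.sum_congr rfl fun k _ => ?_
            rw [Real.norm_eq_abs, abs_of_nonneg (hB i k)]
        _ < 1 := hrow i
    exact_mod_cast this
  have hinv : (1 - B)⁻¹ = ∑' m : ℕ, B ^ m := by
    rw [Matrix.nonsing_inv_eq_ringInverse, ← geom_series_eq_inverse B hnorm]
    rfl
  have hsum : Summable (fun m : ℕ => B ^ m) := summable_geometric_of_norm_lt_one hnorm
  have hpow : ∀ (m : ℕ) i k, 0 ≤ (B ^ m) i k := by
    intro m
    induction m with
    | zero => intro i k; rw [pow_zero]; by_cases h : i = k <;>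
        simp [Matrix.one_apply, h]
    | succ m ih => intro i k
                   rw [pow_succ, Matrix.mul_apply]
                   exact Finset.sum_nonneg fun l _ => mul_nonneg (ih i l) (hB l k)
  have hnn : ∀ i k, 0 ≤ (1 - B)⁻¹ i k := by
    intro i k
    let ev : Matrix (Fin n) (Fin n) ℝ →ₗ[ℝ] ℝ := Matrix.entryLinearMap ℝ ℝ i k
    have hev : (∑' m : ℕ, B ^ m) i k = ∑' m : ℕ, (B ^ m) i k := by
      have := (LinearMap.toContinuousLinearMap ev).map_tsum hsum
      simpa [ev] using this
    rw [hinv, hev]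
    exact tsum_nonneg fun m => hpow m i k
  refine ⟨hnn, ?_⟩
  have hu : IsUnit (1 - B) := isUnit_one_sub_of_norm_lt_one hnorm
  have hmul : (1 - B) * (1 - B)⁻¹ = 1 :=
    Matrix.mul_nonsing_inv _ ((Matrix.isUnit_iff_isUnit_det _).mp hu)
  rw [sub_mul, one_mul] at hmul
  exact eq_add_of_sub_eq hmul

theorem stmt_7 (n : ℕ) (W Q : Matrix (Fin n) (Fin n) ℝ)
    (hWnonneg : ∀ i j, 0 ≤ W i j) (hWrow : ∀ i, ∑ j, W i j = 1)
    (j : Fin n) (hWcol : ∀ i, 0 < W i j)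
    (hQnonneg : ∀ i j, 0 ≤ Q i j) (hQrow : ∀ i, ∑ j, Q i j = 1)
    (hQdiag : ∀ i, Q i i = 0)
    (δ : Fin n → ℝ) (hδ0 : ∀ i, 0 ≤ δ i) (hδ1 : ∀ i, δ i < 1)
    (D : Matrix (Fin n) (Fin n) ℝ) (hD : D = Matrix.diagonal (fun i => W i i))
    (M : Matrix (Fin n) (Fin n) ℝ)
    (hM : M = D + (W - D) * (1 - Matrix.diagonal δ * Q)⁻¹ * (1 - Matrix.diagonal δ)) :
    (∀ i j', 0 ≤ M i j') ∧ (∀ i, 0 < M i j) := by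
  set B := Matrix.diagonal δ * Q with hBdef
  have hBentry : ∀ i k, B i k = δ i * Q i k := by
    intro i k; simp [hBdef, Matrix.diagonal_mul]
  have hBnn : ∀ i k, 0 ≤ B i k := fun i k => by
    rw [hBentry]; exact mul_nonneg (hδ0 i) (hQnonneg i k)
  have hBrow : ∀ i, ∑ k, B i k < 1 := by
    intro i
    calc ∑ k, B i k = δ i * ∑ k, Q i k := by
          rw [Finset.mul_sum]; exact Finset.sum_congr rfl fun k _ => hBentry i k
      _ = δ i := by rw [hQrow, mul_one]
      _ < 1 := hδ1 i
  obtain ⟨hNnn, hNeq⟩ := aux_inv n B hBnn hBrow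
  set N := (1 - B)⁻¹ with hNdef
  -- entries of W - D
  have hWD : ∀ i k, (W - D) i k = if k = i then 0 else W i k := by
    intro i k
    by_cases h : k = i
    · subst h; simp [hD, Matrix.sub_apply, Matrix.diagonal_apply_eq]
    · rw [if_neg h]; simp [hD, Matrix.sub_apply, Matrix.diagonal_apply_ne' _ h]
  have hWDnn : ∀ i k, 0 ≤ (W - D) i k := by
    intro i k; rw [hWD]; split
    · exact le_rfl
    · exact hWnonneg i k
  -- entry formula for M
  have hMentry : ∀ i j', M i j' =
      D i j' + (∑ k, (W - D) i k * N k j') * (1 - δ j') := by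
    intro i j'
    have h1 : (1 : Matrix (Fin n) (Fin n) ℝ) - Matrix.diagonal δ
        = Matrix.diagonal (fun i => 1 - δ i) := by
      rw [← Matrix.diagonal_one, Matrix.diagonal_sub]
    rw [hM, h1, Matrix.add_apply, Matrix.mul_diagonal, Matrix.mul_apply]
  have hDnn : ∀ i j', 0 ≤ D i j' := by
    intro i j'
    by_cases h : i = j' <;> simp [hD, Matrix.diagonal_apply, h, hWnonneg]
  have hδ1' : ∀ i, 0 < 1 - δ i := fun i => by linarith [hδ1 i]
  have hsum_nn : ∀ i j', 0 ≤ ∑ k, (W - D) i k * N k j' := fun i j' =>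
    Finset.sum_nonneg fun k _ => mul_nonneg (hWDnn i k) (hNnn k j')
  constructor
  · intro i j'
    rw [hMentry]
    have := mul_nonneg (hsum_nn i j') (hδ1' j').le
    exact add_nonneg (hDnn i j') this
  · intro i
    rw [hMentry]
    by_cases h : i = j
    · have hDij : 0 < D i j := by
        subst h; simp [hD, Matrix.diagonal_apply]; exact hWcol i
      exact lt_add_of_lt_of_nonneg hDij (mul_nonneg (hsum_nn i j) (hδ1' j).le)
    · -- i ≠ j : the k = j term is positive
      have hNjj : 1 ≤ N j j := by
        have : N j j = 1 + (B * N) j j := by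
          conv_lhs => rw [hNeq]
          rw [Matrix.add_apply, Matrix.one_apply_eq]
        rw [this]
        have : 0 ≤ (B * N) j j := by
          rw [Matrix.mul_apply]
          exact Finset.sum_nonneg fun l _ => mul_nonneg (hBnn j l) (hNnn l j)
        linarith
      have hterm : 0 < (W - D) i j * N j j := by
        have h1 : (W - D) i j = W i j := by
          rw [hWD, if_neg (fun hh => h hh.symm)]
        rw [h1]
        exact mul_pos (hWcol i) (lt_of_lt_of_le one_pos hNjj)
      have hsum_pos : 0 < ∑ k, (W - D) i k * N k j := by
        refine Finset.sum_pos' (fun k _ => mul_nonneg (hWDnn i k) (hNnn k j)) ?_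
        exact ⟨j, Finset.mem_univ j, hterm⟩
      have := mul_pos hsum_pos (hδ1' j)
      exact lt_add_of_le_of_pos (hDnn i j) this
end

section
/- If Q is a row-stochastic n×n matrix with strictly positive off-diagonal entries and zero diagonal, Δ is diagonal with 0 < δ_i < 1 for all i, and the row-stochastic nonnegative matrix W has at least two strictly positive columns, then M = D + (W − D)·(I − ΔQ)^{-1}·(I − Δ) is strictly positive in every entry. -/
open Matrix

theorem stmt_8 (n : ℕ) (hn : 2 ≤ n) (W Q : Matrix (Fin n) (Fin n) ℝ)
    (hWnonneg : ∀ i j, 0 ≤ W i j) (hWrow : ∀ i, ∑ j, W i j = 1)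
    (j₁ j₂ : Fin n) (hjj : j₁ ≠ j₂)
    (hWcol₁ : ∀ i, 0 < W i j₁) (hWcol₂ : ∀ i, 0 < W i j₂)
    (hQnonneg : ∀ i j, 0 ≤ Q i j) (hQrow : ∀ i, ∑ j, Q i j = 1)
    (hQdiag : ∀ i, Q i i = 0) (hQoff : ∀ i j, i ≠ j → 0 < Q i j)
    (δ : Fin n → ℝ) (hδ0 : ∀ i, 0 < δ i) (hδ1 : ∀ i, δ i < 1)
    (D : Matrix (Fin n) (Fin n) ℝ) (hD : D = Matrix.diagonal (fun i => W i i))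
    (M : Matrix (Fin n) (Fin n) ℝ)
    (hM : M = D + (W - D) * (1 - Matrix.diagonal δ * Q)⁻¹ * (1 - Matrix.diagonal δ)) :
    ∀ i j, 0 < M i j := by
  have hne : Nonempty (Fin n) := ⟨⟨0, by omega⟩⟩
  set B : Matrix (Fin n) (Fin n) ℝ := 1 - Matrix.diagonal δ * Q with hB
  -- B is strictly diagonally dominant, hence invertible
  have hdet : B.det ≠ 0 := by
    apply det_ne_zero_of_sum_row_lt_diag
    intro k
    have h1 : B k k = 1 := by simp [hB, Matrix.sub_apply, diagonal_mul, hQdiag k]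
    rw [h1]
    have h2 : ∀ j ∈ Finset.univ.erase k, ‖B k j‖ = δ k * Q k j := by
      intro j hj
      have hjk : j ≠ k := (Finset.mem_erase.mp hj).1
      rw [hB, Matrix.sub_apply, one_apply_ne' hjk, diagonal_mul, zero_sub, norm_neg,
        Real.norm_eq_abs, abs_of_nonneg (mul_nonneg (hδ0 k).le (hQnonneg k j))]
    rw [Finset.sum_congr rfl h2, ← Finset.mul_sum]
    have h3 : ∑ j ∈ Finset.univ.erase k, Q k j = 1 := by
      rw [Finset.sum_erase_eq_sub (Finset.mem_univ k), hQrow, hQdiag, sub_zero]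
    rw [h3, mul_one]
    simpa using hδ1 k
  set N : Matrix (Fin n) (Fin n) ℝ := B⁻¹ with hN
  have hBN : B * N = 1 := mul_nonsing_inv B (isUnit_iff_ne_zero.mpr hdet)
  -- the entrywise fixed-point equation for N
  have key : ∀ i j, N i j = δ i * ∑ k, Q i k * N k j + (if i = j then (1:ℝ) else 0) := by
    intro i j
    have h := congrFun (congrFun hBN i) j
    rw [mul_apply] at h
    have hexp : ∀ k, B i k * N k j
        = (if i = k then (1:ℝ) else 0) * N k j - δ i * (Q i k * N k j) := by
      intro k
      rw [hB, Matrix.sub_apply, diagonal_mul, one_apply]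
      ring
    rw [Finset.sum_congr rfl (fun k _ => hexp k), Finset.sum_sub_distrib] at h
    simp only [ite_mul, one_mul, zero_mul, Finset.sum_ite_eq, Finset.mem_univ,
      if_true, ← Finset.mul_sum] at h
    have h1 : ((1 : Matrix (Fin n) (Fin n) ℝ)) i j = if i = j then (1:ℝ) else 0 :=
      one_apply
    rw [h1] at h
    linarith
  -- column nonnegativity of N
  have hNnonneg : ∀ i j, 0 ≤ N i j := by
    intro i j
    obtain ⟨i₀, -, hmin⟩ := Finset.exists_min_image Finset.univ (fun k => N k j)
      ⟨i, Finset.mem_univ i⟩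
    have hmin' : ∀ k, N i₀ j ≤ N k j := fun k => hmin k (Finset.mem_univ k)
    have h0 : 0 ≤ N i₀ j := by
      by_contra hneg
      push_neg at hneg
      have hsum : N i₀ j ≤ ∑ k, Q i₀ k * N k j := by
        calc N i₀ j = ∑ k, Q i₀ k * N i₀ j := by
              rw [← Finset.sum_mul, hQrow, one_mul]
          _ ≤ ∑ k, Q i₀ k * N k j :=
              Finset.sum_le_sum (fun k _ => mul_le_mul_of_nonneg_left (hmin' k) (hQnonneg i₀ k))
      have hkey := key i₀ j
      have hite : (0:ℝ) ≤ if i₀ = j then (1:ℝ) else 0 := by positivity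
      have hlt : δ i₀ * N i₀ j ≤ δ i₀ * ∑ k, Q i₀ k * N k j :=
        mul_le_mul_of_nonneg_left hsum (hδ0 i₀).le
      nlinarith [hδ1 i₀, hδ0 i₀]
    exact le_trans h0 (hmin' i)
  -- strict positivity of N
  have hNpos : ∀ i j, 0 < N i j := by
    intro i j
    have hxj : (1:ℝ) ≤ N j j := by
      have hkey := key j j
      rw [if_pos rfl] at hkey
      have : 0 ≤ δ j * ∑ k, Q j k * N k j := by
        apply mul_nonneg (hδ0 j).le
        exact Finset.sum_nonneg (fun k _ => mul_nonneg (hQnonneg j k) (hNnonneg k j))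
      linarith
    rcases eq_or_ne i j with rfl | hij
    · linarith
    · have hkey := key i j
      rw [if_neg hij, add_zero] at hkey
      have hterm : Q i j * N j j ≤ ∑ k, Q i k * N k j :=
        Finset.single_le_sum (f := fun k => Q i k * N k j)
          (fun k _ => mul_nonneg (hQnonneg i k) (hNnonneg k j)) (Finset.mem_univ j)
      have hpos : 0 < Q i j * N j j := mul_pos (hQoff i j hij) (by linarith)
      rw [hkey]
      exact mul_pos (hδ0 i) (lt_of_lt_of_le hpos hterm)
  -- P = N * (1 - Δ) is entrywise positive
  set P : Matrix (Fin n) (Fin n) ℝ := N * (1 - Matrix.diagonal δ) with hP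
  have hPpos : ∀ i j, 0 < P i j := by
    intro i j
    have h1 : (1 : Matrix (Fin n) (Fin n) ℝ) - Matrix.diagonal δ
        = Matrix.diagonal (fun k => 1 - δ k) := by
      rw [← Matrix.diagonal_one, Matrix.diagonal_sub]
    rw [hP, h1, mul_diagonal]
    exact mul_pos (hNpos i j) (by linarith [hδ1 j])
  -- W - D is nonnegative
  have hWD : ∀ i k, 0 ≤ (W - D) i k := by
    intro i k
    rw [Matrix.sub_apply, hD]
    rcases eq_or_ne i k with rfl | hik
    · simp
    · rw [diagonal_apply_ne' _ (Ne.symm hik)]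
      simpa using hWnonneg i k
  intro i j
  rw [hM, mul_assoc, ← hP, Matrix.add_apply, mul_apply]
  have hDnn : 0 ≤ D i j := by
    rw [hD]
    rcases eq_or_ne i j with rfl | hij
    · simpa using hWnonneg i i
    · rw [diagonal_apply_ne _ hij]
  have hsumpos : 0 < ∑ k, (W - D) i k * P k j := by
    apply Finset.sum_pos'
    · exact fun k _ => mul_nonneg (hWD i k) (hPpos k j).le
    · obtain ⟨k, hki, hk⟩ : ∃ k, k ≠ i ∧ 0 < W i k := by
        rcases eq_or_ne i j₁ with rfl | h1
        · exact ⟨j₂, (Ne.symm hjj), hWcol₂ i⟩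
        · exact ⟨j₁, Ne.symm h1, hWcol₁ i⟩
      refine ⟨k, Finset.mem_univ k, ?_⟩
      have : (W - D) i k = W i k := by
        rw [Matrix.sub_apply, hD, diagonal_apply_ne' _ hki, sub_zero]
      rw [this]
      exact mul_pos hk (hPpos k j)
  linarith
end

section
/- Let u_i(s) = −(1−δ_i)(s_i − b_i)² − δ_i(s_i − (Qs)_i)² for i = 1,…,n, where Q is row-stochastic with zero diagonal and |δ_i| < 1. Then the unique simultaneous solution of the first-order conditions (the Nash equilibrium of the game) is s* = (I − ΔQ)^{-1}(I − Δ)·b, where Δ = diag(δ_1,…,δ_n). -/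
open Matrix

theorem stmt_10 (n : ℕ) (Q : Matrix (Fin n) (Fin n) ℝ)
    (hQnonneg : ∀ i j, 0 ≤ Q i j) (hQrow : ∀ i, ∑ j, Q i j = 1)
    (hQdiag : ∀ i, Q i i = 0)
    (δ : Fin n → ℝ) (hδ : ∀ i, |δ i| < 1)
    (b : Fin n → ℝ) (s : Fin n → ℝ) :
    (∀ i, (1 - δ i) * (s i - b i) + δ i * (s i - ∑ j, Q i j * s j) = 0) ↔
      s = ((1 - Matrix.diagonal δ * Q)⁻¹ * (1 - Matrix.diagonal δ)) *ᵥ b := by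
  set A : Matrix (Fin n) (Fin n) ℝ := 1 - Matrix.diagonal δ * Q with hA
  have hAij : ∀ i j, A i j = (if i = j then 1 else 0) - δ i * Q i j := by
    intro i j
    simp [hA, Matrix.sub_apply, Matrix.one_apply, Matrix.mul_apply, Matrix.diagonal_apply,
      Finset.sum_ite_eq]
  have hdet : A.det ≠ 0 := by
    apply det_ne_zero_of_sum_row_lt_diag
    intro k
    have h1 : ∀ j ∈ Finset.univ.erase k, ‖A k j‖ = |δ k| * Q k j := by
      intro j hj
      have hjk : k ≠ j := fun h => (Finset.mem_erase.mp hj).1 h.symm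
      rw [hAij, if_neg hjk]
      simp [Real.norm_eq_abs, abs_mul, abs_of_nonneg (hQnonneg k j)]
    rw [Finset.sum_congr rfl h1]
    have hkk : ‖A k k‖ = 1 := by
      rw [hAij, if_pos rfl, hQdiag, mul_zero, sub_zero]; norm_num
    rw [hkk, ← Finset.mul_sum]
    have : ∑ j ∈ Finset.univ.erase k, Q k j = 1 := by
      rw [Finset.sum_erase_eq_sub (Finset.mem_univ k), hQdiag, sub_zero, hQrow]
    rw [this, mul_one]
    exact hδ k
  have hunit : IsUnit A.det := isUnit_iff_ne_zero.mpr hdet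
  have key : (∀ i, (1 - δ i) * (s i - b i) + δ i * (s i - ∑ j, Q i j * s j) = 0) ↔
      A *ᵥ s = (1 - Matrix.diagonal δ) *ᵥ b := by
    constructor
    · intro h
      funext i
      have := h i
      have hAs : (A *ᵥ s) i = s i - δ i * ∑ j, Q i j * s j := by
        simp only [Matrix.mulVec, dotProduct, hAij, sub_mul, ite_mul, one_mul, zero_mul,
          Finset.sum_sub_distrib, Finset.sum_ite_eq, Finset.mem_univ, if_pos, mul_assoc,
          ← Finset.mul_sum]
      have hb : ((1 - Matrix.diagonal δ) *ᵥ b) i = (1 - δ i) * b i := by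
        simp [Matrix.mulVec, dotProduct, Matrix.sub_apply, Matrix.one_apply,
          Matrix.diagonal_apply, sub_mul, ite_mul, Finset.sum_sub_distrib, Finset.sum_ite_eq,
          sub_mul]
      rw [hAs, hb]; linarith
    · intro h i
      have := congrFun h i
      have hAs : (A *ᵥ s) i = s i - δ i * ∑ j, Q i j * s j := by
        simp only [Matrix.mulVec, dotProduct, hAij, sub_mul, ite_mul, one_mul, zero_mul,
          Finset.sum_sub_distrib, Finset.sum_ite_eq, Finset.mem_univ, if_pos, mul_assoc,
          ← Finset.mul_sum]
      have hb : ((1 - Matrix.diagonal δ) *ᵥ b) i = (1 - δ i) * b i := by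
        simp [Matrix.mulVec, dotProduct, Matrix.sub_apply, Matrix.one_apply,
          Matrix.diagonal_apply, sub_mul, ite_mul, Finset.sum_sub_distrib, Finset.sum_ite_eq,
          sub_mul]
      rw [hAs, hb] at this; linarith
  rw [key]
  rw [← Matrix.mulVec_mulVec]
  constructor
  · intro h
    rw [← h, Matrix.mulVec_mulVec, Matrix.nonsing_inv_mul A hunit, Matrix.one_mulVec]
  · intro h
    rw [h, Matrix.mulVec_mulVec, Matrix.mul_nonsing_inv A hunit, Matrix.one_mulVec]
end
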